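/- Let G be a real symmetric matrix indexed by a finite nonempty type and let G⁺ be its stoquastic. Then (1/β)·log(Tr exp(βG⁺)/Tr exp(βG)) converges as β → ∞ to the gap negativity η′ = λ(G⁺) − λ(G), where λ denotes the largest eigenvalue. In particular, the inverse average sign Tr exp(βG⁺)/Tr exp(βG) grows like e^{β·η′} at low temperatures. -/

import Mathlib

open Matrix Finset

lemma trace_exp_herm {n : Type*} [Fintype n] [DecidableEq n] {G : Matrix n n ℝ}
    (hG : G.IsHermitian) (β : ℝ) :
    (NormedSpace.exp (β • G)).trace = ∑ i, Real.exp (β * hG.eigenvalues i) := by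
  set U : Matrix n n ℝ := (hG.eigenvectorUnitary : Matrix n n ℝ) with hUdef
  have hsU : star U * U = 1 := mem_unitaryGroup_iff'.mp hG.eigenvectorUnitary.2
  have hU : IsUnit U := (isUnit_iff_exists.mpr ⟨star U, mem_unitaryGroup_iff.mp hG.eigenvectorUnitary.2, hsU⟩)
  have hinv : U⁻¹ = star U := inv_eq_left_inv hsU
  have hd : diagonal (fun i => β * hG.eigenvalues i)
      = β • diagonal (RCLike.ofReal ∘ hG.eigenvalues) := by
    ext i j
    rcases eq_or_ne i j with rfl | h
    · simp
    · simp [diagonal_apply_ne _ h]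
  have h1 : β • G = U * diagonal (fun i => β * hG.eigenvalues i) * U⁻¹ := by
    rw [hinv, hd, Matrix.mul_smul, Matrix.smul_mul]
    congr 1
    rw [hUdef]
    exact hG.spectral_theorem
  rw [h1, Matrix.exp_conj U (diagonal fun i => β * hG.eigenvalues i) hU, hinv,
    Matrix.trace_mul_cycle, hsU, one_mul,
    Matrix.exp_diagonal, Matrix.trace_diagonal]
  congr 1
  ext i
  simp [← Real.exp_eq_exp_ℝ]


lemma tendsto_inv_log_sum_exp {n : Type*} [Fintype n] [Nonempty n] (x : n → ℝ) :
    Filter.Tendsto (fun β : ℝ => (1 / β) * Real.log (∑ i, Real.exp (β * x i)))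
      Filter.atTop (nhds (⨆ i, x i)) := by
  obtain ⟨i0, hi0⟩ : ∃ i0, (⨆ i, x i) = x i0 := by
    obtain ⟨i0, h⟩ := Finite.exists_max x
    exact ⟨i0, le_antisymm (ciSup_le h) (le_ciSup (Set.Finite.bddAbove (Set.finite_range x)) i0)⟩
  set M := ⨆ i, x i with hM
  have hpos : ∀ β : ℝ, 0 < ∑ i, Real.exp (β * x i) := fun β =>
    Finset.sum_pos (fun i _ => Real.exp_pos _) univ_nonempty
  have hlo : ∀ᶠ β : ℝ in Filter.atTop, M ≤ (1 / β) * Real.log (∑ i, Real.exp (β * x i)) := by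
    filter_upwards [Filter.eventually_gt_atTop 0] with β hβ
    have h1 : Real.exp (β * M) ≤ ∑ i, Real.exp (β * x i) := by
      rw [hi0]
      exact Finset.single_le_sum (f := fun i => Real.exp (β * x i)) (fun i _ => (Real.exp_pos _).le) (mem_univ i0)
    have h2 : β * M ≤ Real.log (∑ i, Real.exp (β * x i)) :=
      (Real.le_log_iff_exp_le (hpos β)).mpr h1
    rw [one_div, inv_mul_eq_div, le_div_iff₀ hβ]
    linarith [h2]
  have hhi : ∀ᶠ β : ℝ in Filter.atTop,
      (1 / β) * Real.log (∑ i, Real.exp (β * x i)) ≤ M + Real.log (Fintype.card n) / β := by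
    filter_upwards [Filter.eventually_gt_atTop 0] with β hβ
    have h1 : ∑ i, Real.exp (β * x i) ≤ (Fintype.card n : ℝ) * Real.exp (β * M) := by
      rw [← Finset.card_univ, ← nsmul_eq_mul, ← Finset.sum_const]
      exact Finset.sum_le_sum fun i _ => Real.exp_le_exp.mpr
        (mul_le_mul_of_nonneg_left (le_ciSup (Set.Finite.bddAbove (Set.finite_range x)) i) hβ.le)
    have h2 : Real.log (∑ i, Real.exp (β * x i)) ≤ Real.log (Fintype.card n) + β * M := by
      calc Real.log (∑ i, Real.exp (β * x i)) ≤ Real.log ((Fintype.card n : ℝ) * Real.exp (β * M)) :=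
            Real.log_le_log (hpos β) h1
        _ = Real.log (Fintype.card n) + β * M := by
            rw [Real.log_mul (by positivity) (Real.exp_ne_zero _), Real.log_exp]
    rw [one_div, inv_mul_eq_div, div_le_iff₀ hβ]
    have : (M + Real.log (Fintype.card n) / β) * β = β * M + Real.log (Fintype.card n) := by
      field_simp
    rw [this]
    linarith [h2]
  have hlim : Filter.Tendsto (fun β : ℝ => M + Real.log (Fintype.card n) / β)
      Filter.atTop (nhds M) := by
    have h := Filter.Tendsto.div_atTop (f := fun _ : ℝ => Real.log (Fintype.card n))
      (l := Filter.atTop) tendsto_const_nhds Filter.tendsto_id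
    have := (tendsto_const_nhds (x := M) (f := Filter.atTop (α := ℝ))).add h
    simpa using this
  exact tendsto_of_tendsto_of_tendsto_of_le_of_le' tendsto_const_nhds hlim hlo hhi

/-- The largest eigenvalue of a Hermitian matrix. -/
noncomputable def maxEig {𝕜 : Type*} [RCLike 𝕜] {n : Type*} [Fintype n] [DecidableEq n]
    {A : Matrix n n 𝕜} (hA : A.IsHermitian) : ℝ := ⨆ i, hA.eigenvalues i

/-- The stoquastic of a real matrix: keep the diagonal, take absolute values off-diagonal. -/
def stoq {n : Type*} [DecidableEq n] (A : Matrix n n ℝ) : Matrix n n ℝ :=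
  fun i j => if i = j then A i j else |A i j|

lemma stoq_isHermitian {n : Type*} [Fintype n] [DecidableEq n] {A : Matrix n n ℝ}
    (hA : A.IsHermitian) : (stoq A).IsHermitian := by
  ext i j
  by_cases h : i = j
  · subst h; simp [stoq, Matrix.conjTranspose_apply]
  · have := hA.apply i j
    simp only [Matrix.conjTranspose_apply, stoq, h, Ne.symm h, if_false, star_trivial] at *
    rw [this]

/-- **Asymptotics of the inverse average sign.** For a real symmetric matrix `G` with
stoquastic `G⁺`, the quantity `(1/β)·log(Tr exp(βG⁺)/Tr exp(βG))` converges as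
`β → ∞` to the gap negativity `η′ = λ(G⁺) − λ(G)`. -/
theorem tendsto_log_inverse_average_sign {n : Type*} [Fintype n] [DecidableEq n] [Nonempty n]
    {G : Matrix n n ℝ} (hG : G.IsHermitian) :
    Filter.Tendsto
      (fun β : ℝ => (1 / β) *
        Real.log ((NormedSpace.exp (β • stoq G)).trace / (NormedSpace.exp (β • G)).trace))
      Filter.atTop (nhds (maxEig (stoq_isHermitian hG) - maxEig hG)) := by
  have hpos : ∀ (x : n → ℝ) (β : ℝ), (0:ℝ) < ∑ i, Real.exp (β * x i) := fun x β =>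
    Finset.sum_pos (fun i _ => Real.exp_pos _) univ_nonempty
  have heq : ∀ β : ℝ, (1 / β) *
      Real.log ((NormedSpace.exp (β • stoq G)).trace / (NormedSpace.exp (β • G)).trace)
      = (1 / β) * Real.log (∑ i, Real.exp (β * (stoq_isHermitian hG).eigenvalues i))
        - (1 / β) * Real.log (∑ i, Real.exp (β * hG.eigenvalues i)) := by
    intro β
    rw [trace_exp_herm (stoq_isHermitian hG) β, trace_exp_herm hG β,
      Real.log_div (hpos _ β).ne' (hpos _ β).ne', mul_sub]
  simp only [heq]
  exact (tendsto_inv_log_sum_exp _).sub (tendsto_inv_log_sum_exp _)
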